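/- Let α < 0 < β, ε > 0, χ ∈ {−1, 0, 1}, and let p < q with ℓ := q − p, and let ℓ_α, ℓ_β ∈ [0, ε/2] be the phase lengths of [p,q]. Set v := (2χ + ∫_p^q g(s/ε) ds)/ℓ and, for any constant c ∈ ℝ, let n(x) := c + ∫_p^x (v − g(s/ε)) ds. Then for every x with p ≤ x and x + ε ≤ q one has n(x + ε) − n(x) = (ε/(2ℓ))(4χ + (β−α)(ℓ_β − ℓ_α)). Moreover, if in addition 0 < ε < 8/(β−α) and χ ≠ 0, then n(x + ε) − n(x) is strictly positive when χ = 1 and strictly negative when χ = −1. -/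

import Mathlib

open MeasureTheory Set

/-- The 1-periodic forcing term: `α` within distance `1/4` of the integers, `β` otherwise. -/
noncomputable def g (α β x : ℝ) : ℝ := if |x - (round x : ℝ)| ≤ 1/4 then α else β

/-- The edge `[p,q]` with endpoint values `a`, `b` is calibrated with velocity `v` by the
Lipschitz field `n : [p,q] → [-1,1]` satisfying `n' = v - g(·/ε)` a.e. on `[p,q]`. -/
def Calibrates (α β ε p q a b v : ℝ) (n : ℝ → ℝ) : Prop :=
  (∃ K : NNReal, LipschitzOnWith K n (Icc p q)) ∧
  (∀ x ∈ Icc p q, n x ∈ Icc (-1 : ℝ) 1) ∧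
  n p = a ∧ n q = b ∧
  ∀ᵐ x ∂(volume.restrict (Icc p q)), HasDerivAt n (v - g α β (x / ε)) x

lemma g_measurable (α β : ℝ) : Measurable (g α β) := by
  have hround : Measurable fun x : ℝ => ((round x : ℤ) : ℝ) := by
    have h1 : Measurable fun x : ℝ => (⌊x + 1/2⌋ : ℤ) :=
      Int.measurable_floor.comp (measurable_id.add_const _)
    have : Measurable fun n : ℤ => (n : ℝ) := measurable_from_top
    simpa [round_eq, Function.comp_def] using this.comp h1
  unfold g
  exact Measurable.ite
    (measurableSet_le ((measurable_id.sub hround).abs) measurable_const)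
    measurable_const measurable_const

lemma g_periodic (α β : ℝ) : Function.Periodic (g α β) 1 := by
  intro x
  unfold g
  rw [round_add_one]
  push_cast
  ring_nf

lemma g_intervalIntegrable (α β ε : ℝ) (hε : ε ≠ 0) (a b : ℝ) :
    IntervalIntegrable (fun s => g α β (s / ε)) volume a b := by
  have hm : Measurable fun s : ℝ => g α β (s / ε) :=
    (g_measurable α β).comp (measurable_id.div_const ε)
  apply IntervalIntegrable.mono_fun'
    (g := fun _ : ℝ => |α| + |β|) (intervalIntegrable_const)
    hm.aestronglyMeasurable
  filter_upwards with x
  unfold g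
  split_ifs <;> simp [abs_abs] <;>
    cases abs_cases α <;> cases abs_cases β <;> linarith [abs_nonneg α, abs_nonneg β]

lemma g_integral_period (α β : ℝ) :
    ∫ u in (-(1/4) : ℝ)..(3/4), g α β u = (α + β) / 2 := by
  have h1 : ∫ u in (-(1/4) : ℝ)..(1/4), g α β u = α / 2 := by
    rw [intervalIntegral.integral_congr (g := fun _ => α)]
    · simp; ring
    · intro u hu
      rw [uIcc_of_le (by norm_num)] at hu
      have hu1 := hu.1; have hu2 := hu.2
      have hr : round u = 0 := by
        rw [round_eq, Int.floor_eq_zero_iff]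
        constructor <;> simp <;> linarith
      unfold g
      rw [hr]
      rw [if_pos (by rw [abs_le]; push_cast; constructor <;> linarith)]
  have h2 : ∫ u in (1/4 : ℝ)..(3/4), g α β u = β / 2 := by
    rw [intervalIntegral.integral_congr_ae (g := fun _ => β)]
    · simp; ring
    · have hne : ∀ᵐ u : ℝ, u ∉ ({(3/4 : ℝ)} : Set ℝ) := by
        rw [← MeasureTheory.measure_eq_zero_iff_ae_notMem]
        exact Real.volume_singleton
      filter_upwards [hne] with u hu hmem
      simp only [mem_singleton_iff] at hu
      rw [uIoc_of_le (by norm_num)] at hmem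
      have hu1 := hmem.1
      have hu2 : u < 3/4 := lt_of_le_of_ne hmem.2 hu
      unfold g
      rcases lt_or_ge u (1/2) with h | h
      · have hr : round u = 0 := by
          rw [round_eq, Int.floor_eq_zero_iff]
          constructor <;> simp <;> linarith
        rw [hr, if_neg]
        rw [abs_le]; push_cast
        intro ⟨_, _⟩; linarith
      · have hr : round u = 1 := by
          rw [round_eq, Int.floor_eq_iff]
          push_cast; constructor <;> linarith
        rw [hr, if_neg]
        rw [abs_le]; push_cast
        intro ⟨h1', _⟩; linarith
  rw [← intervalIntegral.integral_add_adjacent_intervals (b := (1/4 : ℝ))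
    ((g_intervalIntegrable α β 1 one_ne_zero _ _).congr ?_)
    ((g_intervalIntegrable α β 1 one_ne_zero _ _).congr ?_), h1, h2]
  · ring
  · intro x _; simp
  · intro x _; simp

theorem stmt6 (α β ε p q χ c lα lβ v : ℝ) (hα : α < 0) (hβ : 0 < β) (hε0 : 0 < ε)
    (hχ : χ = -1 ∨ χ = 0 ∨ χ = 1) (hpq : p < q)
    (hlα0 : 0 ≤ lα) (hlα1 : lα ≤ ε / 2) (hlβ0 : 0 ≤ lβ) (hlβ1 : lβ ≤ ε / 2)
    (hsum : lα + lβ = (q - p) - ε * (⌊(q - p) / ε⌋ : ℝ))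
    (hint : ∫ s in p..q, g α β (s / ε)
      = (α + β) / 2 * ((q - p) - lα - lβ) + α * lα + β * lβ)
    (hv : v = (2 * χ + ∫ s in p..q, g α β (s / ε)) / (q - p))
    (n : ℝ → ℝ) (hn : n = fun x => c + ∫ s in p..x, (v - g α β (s / ε))) :
    ∀ x : ℝ, p ≤ x → x + ε ≤ q →
      n (x + ε) - n x = ε / (2 * (q - p)) * (4 * χ + (β - α) * (lβ - lα)) ∧
      (ε < 8 / (β - α) →
        (χ = 1 → 0 < n (x + ε) - n x) ∧ (χ = -1 → n (x + ε) - n x < 0)) := by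
  intro x hx hxe
  have hεne : ε ≠ 0 := hε0.ne'
  have hq : q - p ≠ 0 := by linarith
  have hgi := g_intervalIntegrable α β ε hεne
  have hInt : ∀ a b : ℝ, IntervalIntegrable (fun s => v - g α β (s / ε)) volume a b :=
    fun a b => (intervalIntegrable_const).sub (hgi a b)
  have hper : Function.Periodic (fun s => g α β (s / ε)) ε := by
    intro s
    have : (s + ε) / ε = s / ε + 1 := by field_simp
    simp only [this]
    exact g_periodic α β (s / ε)
  have hkey : n (x + ε) - n x = ε * v - ε * ((α + β) / 2) := by
    rw [hn]
    simp only
    rw [add_sub_add_left_eq_sub,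
      intervalIntegral.integral_interval_sub_left (hInt p (x + ε)) (hInt p x),
      intervalIntegral.integral_sub intervalIntegrable_const (hgi x (x + ε)),
      intervalIntegral.integral_const]
    have hP : ∫ s in x..(x + ε), g α β (s / ε)
        = ∫ s in (-(ε/4))..(-(ε/4) + ε), g α β (s / ε) :=
      hper.intervalIntegral_add_eq x (-(ε/4))
    have hC : ∫ s in (-(ε/4))..(-(ε/4) + ε), g α β (s / ε)
        = ε * ((α + β) / 2) := by
      rw [intervalIntegral.integral_comp_div (fun u => g α β u) hεne]
      have e1 : -(ε/4) / ε = -(1/4) := by field_simp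
      have e2 : (-(ε/4) + ε) / ε = 3/4 := by field_simp; ring
      rw [e1, e2, g_integral_period, smul_eq_mul]
    rw [hP, hC]
    simp
  have hmain : n (x + ε) - n x
      = ε / (2 * (q - p)) * (4 * χ + (β - α) * (lβ - lα)) := by
    rw [hkey, hv, hint]
    field_simp
    ring
  refine ⟨hmain, fun hε8 => ?_⟩
  have hba : (0 : ℝ) < β - α := by linarith
  have h8 : ε * (β - α) < 8 := (lt_div_iff₀ hba).mp hε8
  constructor
  · rintro rfl
    rw [hmain]
    apply mul_pos (div_pos hε0 (by linarith))
    nlinarith [mul_le_mul_of_nonneg_left hlα1 hba.le, mul_nonneg hba.le hlβ0]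
  · rintro rfl
    rw [hmain]
    apply mul_neg_of_pos_of_neg (div_pos hε0 (by linarith))
    nlinarith [mul_le_mul_of_nonneg_left hlβ1 hba.le, mul_nonneg hba.le hlα0]
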